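/- Along solutions of the error system v̄' = g(e₃ − γ̄) − k₁ᵛ v̄ + k₂ᵛ γ̄ × (γ̄ × v̄), γ̄' = −k₁ʳ γ̄ × (γ̄ × v̄) with |γ̄| = 1, the time derivative of L0(v̄, γ̄) = (1/2)|v̄|² + (g k₂ᵛ)/(2 k₁ᵛ k₁ʳ)|e₃ − γ̄|² − (g/k₁ᵛ) v̄ᵀ(e₃ − γ̄) equals −k₁ᵛ |v̄ − (g/k₁ᵛ)(e₃ − γ̄)|² − (k₂ᵛ − g k₁ʳ/k₁ᵛ)|γ̄ × v̄|². -/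

import Mathlib

open Matrix

noncomputable section

def cross3 (u v : Fin 3 → ℝ) : Fin 3 → ℝ :=
  ![u 1 * v 2 - u 2 * v 1, u 2 * v 0 - u 0 * v 2, u 0 * v 1 - u 1 * v 0]

def norm3 (u : Fin 3 → ℝ) : ℝ := Real.sqrt (u ⬝ᵥ u)

def e3 : Fin 3 → ℝ := ![0, 0, 1]

def L0 (g k1v k2v k1r : ℝ) (v γ : Fin 3 → ℝ) : ℝ :=
  (1 / 2) * (v ⬝ᵥ v) + (g * k2v) / (2 * k1v * k1r) * ((e3 - γ) ⬝ᵥ (e3 - γ))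
    - (g / k1v) * (v ⬝ᵥ (e3 - γ))

lemma dot_hasDerivAt {f h : ℝ → Fin 3 → ℝ} {f' h' : Fin 3 → ℝ} {t : ℝ}
    (hf : HasDerivAt f f' t) (hh : HasDerivAt h h' t) :
    HasDerivAt (fun s => f s ⬝ᵥ h s) (f' ⬝ᵥ h t + f t ⬝ᵥ h') t := by
  have hf' := hasDerivAt_pi.mp hf
  have hh' := hasDerivAt_pi.mp hh
  simp only [dotProduct, Fin.sum_univ_three]
  convert ((hf' 0).mul (hh' 0)).add (((hf' 1).mul (hh' 1)).add ((hf' 2).mul (hh' 2))) using 1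
  · rfl
  · rfl
  · ext s; simp only [Pi.add_apply, Pi.mul_apply]; ring
  · ring

lemma norm3_sq (u : Fin 3 → ℝ) : (norm3 u)^2 = u ⬝ᵥ u := by
  rw [norm3, Real.sq_sqrt]
  simp only [dotProduct, Fin.sum_univ_three]
  nlinarith [sq_nonneg (u 0), sq_nonneg (u 1), sq_nonneg (u 2)]

/-- time derivative of `L0` along solutions of the error system of
`γ`-Observer 1. -/
theorem stmt_1 (g k1v k2v k1r : ℝ) (hg : 0 < g) (h1 : 0 < k1v) (h2 : 0 < k2v)
    (h3 : 0 < k1r) (v γ : ℝ → Fin 3 → ℝ)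
    (hγunit : ∀ t, norm3 (γ t) = 1)
    (hv : ∀ t, HasDerivAt v
      (g • (e3 - γ t) - k1v • v t + k2v • cross3 (γ t) (cross3 (γ t) (v t))) t)
    (hγ : ∀ t, HasDerivAt γ (-(k1r • cross3 (γ t) (cross3 (γ t) (v t)))) t) :
    ∀ t, HasDerivAt (fun s => L0 g k1v k2v k1r (v s) (γ s))
      (-(k1v * (norm3 (v t - (g / k1v) • (e3 - γ t)))^2)
        - (k2v - g * k1r / k1v) * (norm3 (cross3 (γ t) (v t)))^2) t := by
  intro t
  have hE : HasDerivAt (fun s => e3 - γ s)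
      ((0:Fin 3 → ℝ) - -(k1r • cross3 (γ t) (cross3 (γ t) (v t)))) t :=
    (hasDerivAt_const t e3).sub (hγ t)
  have H := (((dot_hasDerivAt (hv t) (hv t)).const_mul ((1:ℝ)/2)).add
      ((dot_hasDerivAt hE hE).const_mul ((g * k2v) / (2 * k1v * k1r)))).sub
      ((dot_hasDerivAt (hv t) hE).const_mul (g / k1v))
  have hunit : γ t ⬝ᵥ γ t = 1 := by
    have := congrArg (·^2) (hγunit t)
    simpa [norm3_sq] using this
  convert H using 1
  · rfl
  · rfl
  · rfl
  rw [norm3_sq, norm3_sq]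
  set γ0 := γ t 0; set γ1 := γ t 1; set γ2 := γ t 2
  set v0 := v t 0; set v1 := v t 1; set v2 := v t 2
  have hunit' : γ0^2 + γ1^2 + γ2^2 = 1 := by
    simpa [dotProduct, Fin.sum_univ_three, sq] using hunit
  simp only [cross3, e3, dotProduct, Fin.sum_univ_three, Pi.sub_apply, Pi.smul_apply,
    Pi.add_apply, Pi.neg_apply, Pi.zero_apply, smul_eq_mul, Matrix.cons_val_zero,
    Matrix.cons_val_one, Matrix.head_cons, Matrix.cons_val_two, Matrix.tail_cons]
  field_simp
  ring
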